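/- Let G be a group of polynomial growth of degree strictly less than 2 (i.e., for every finite generating set of any finitely generated subgroup, the ball counting function is o(r²)) and assume G is torsion-free and infinite. Then G is isomorphic to ℤ. -/

import Mathlib

open Filter Asymptotics

/-- The word length of `g` with respect to a generating set `S`. -/
noncomputable def wordLength {G : Type*} [Group G] (S : Set G) (g : G) : ℕ :=
  sInf {m | ∃ l : List G, (∀ x ∈ l, x ∈ S ∪ S⁻¹ ∪ {1}) ∧ l.length = m ∧ l.prod = g}

/-- A monoid is torsion-free if no nontrivial element has finite order
(the definition removed from Mathlib, restored with its old meaning). -/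
def Monoid.IsTorsionFree (G : Type*) [Monoid G] : Prop :=
  ∀ g : G, g ≠ 1 → ¬IsOfFinOrder g

namespace Subq

variable {G : Type*} [Group G]

/-- alphabet -/
def alph (S : Set G) : Set G := S ∪ S⁻¹ ∪ {1}

lemma one_mem_alph (S : Set G) : (1 : G) ∈ alph S := Or.inr rfl

lemma mem_alph_of_mem {S : Set G} {x : G} (h : x ∈ S) : x ∈ alph S :=
  Or.inl (Or.inl h)

lemma inv_mem_alph {S : Set G} {x : G} (h : x ∈ alph S) : x⁻¹ ∈ alph S := by
  rcases h with (h | h) | h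
  · exact Or.inl (Or.inr (by simpa using h))
  · exact Or.inl (Or.inl (by simpa using h))
  · simp only [Set.mem_singleton_iff] at h; subst h; exact Or.inr (by simp)

lemma alph_finite {S : Set G} (hS : S.Finite) : (alph S).Finite :=
  ((hS.union hS.inv).union (Set.finite_singleton 1))

lemma wordLength_le {S : Set G} {g : G} {l : List G}
    (hl : ∀ x ∈ l, x ∈ alph S) (hp : l.prod = g) : wordLength S g ≤ l.length :=
  Nat.sInf_le ⟨l, hl, rfl, hp⟩

lemma exists_rep {S : Set G} (hS : Subgroup.closure S = ⊤) (g : G) :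
    ∃ l : List G, (∀ x ∈ l, x ∈ alph S) ∧ l.prod = g := by
  have hg : g ∈ Subgroup.closure S := hS ▸ Subgroup.mem_top g
  induction hg using Subgroup.closure_induction with
  | mem x hx => exact ⟨[x], by intro y hy; simp at hy; subst hy; exact mem_alph_of_mem hx, by simp⟩
  | one => exact ⟨[], by simp, by simp⟩
  | mul x y _ _ ihx ihy =>
      obtain ⟨l1, h1, p1⟩ := ihx
      obtain ⟨l2, h2, p2⟩ := ihy
      refine ⟨l1 ++ l2, ?_, by simp [p1, p2]⟩
      intro z hz
      rcases List.mem_append.1 hz with h | h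
      exacts [h1 z h, h2 z h]
  | inv x _ ihx =>
      obtain ⟨l, h1, p1⟩ := ihx
      refine ⟨(l.map Inv.inv).reverse, ?_, ?_⟩
      · intro z hz
        simp only [List.mem_reverse, List.mem_map] at hz
        obtain ⟨w, hw, rfl⟩ := hz
        exact inv_mem_alph (h1 w hw)
      · rw [← p1]; exact (List.prod_inv_reverse l).symm

lemma exists_min_rep {S : Set G} (hS : Subgroup.closure S = ⊤) (g : G) :
    ∃ l : List G, (∀ x ∈ l, x ∈ alph S) ∧ l.length = wordLength S g ∧ l.prod = g := by
  have hne : {m | ∃ l : List G, (∀ x ∈ l, x ∈ S ∪ S⁻¹ ∪ {1}) ∧ l.length = m ∧ l.prod = g}.Nonempty := by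
    obtain ⟨l, h1, h2⟩ := exists_rep hS g
    exact ⟨l.length, l, h1, rfl, h2⟩
  exact Nat.sInf_mem hne

lemma wordLength_one (S : Set G) : wordLength S 1 = 0 :=
  Nat.le_zero.1 (wordLength_le (l := []) (by simp) (by simp))

lemma wordLength_mul_le {S : Set G} (hS : Subgroup.closure S = ⊤) (g h : G) :
    wordLength S (g * h) ≤ wordLength S g + wordLength S h := by
  obtain ⟨l1, a1, b1, c1⟩ := exists_min_rep hS g
  obtain ⟨l2, a2, b2, c2⟩ := exists_min_rep hS h
  calc wordLength S (g * h) ≤ (l1 ++ l2).length := by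
        refine wordLength_le ?_ (by simp [c1, c2])
        intro z hz; rcases List.mem_append.1 hz with hh | hh; exacts [a1 z hh, a2 z hh]
    _ = _ := by simp [b1, b2]

lemma wordLength_pow_le {S : Set G} {a : G} (ha : a ∈ alph S) (n : ℕ) :
    wordLength S (a ^ n) ≤ n := by
  have := wordLength_le (S := S) (l := List.replicate n a)
    (by intro x hx; rw [List.eq_of_mem_replicate hx]; exact ha) (List.prod_replicate n a)
  simpa using this

lemma wordLength_zpow_le {S : Set G} {a : G} (ha : a ∈ alph S) (m : ℤ) :
    wordLength S (a ^ m) ≤ m.natAbs := by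
  rcases Int.natAbs_eq m with h | h
  · rw [h, zpow_natCast]; exact wordLength_pow_le ha m.natAbs
  · calc wordLength S (a ^ m) = wordLength S (a⁻¹ ^ m.natAbs) := by
          rw [inv_pow, ← zpow_natCast, ← zpow_neg, ← h]
      _ ≤ m.natAbs := wordLength_pow_le (inv_mem_alph ha) m.natAbs


lemma wordLength_alph_le {S : Set G} {x : G} (h : x ∈ alph S) :
    wordLength S x ≤ 1 := by
  have := wordLength_le (S := S) (g := x) (l := [x])
    (fun y hy => by simp only [List.mem_singleton] at hy; subst hy; exact h)
    (by simp)
  simpa using this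

/-- step decomposition -/
lemma exists_step {S : Set G} (hS : Subgroup.closure S = ⊤) {g : G} {n : ℕ}
    (hg : wordLength S g ≤ n + 1) :
    ∃ h x, wordLength S h ≤ n ∧ x ∈ alph S ∧ g = h * x := by
  obtain ⟨l, a1, b1, c1⟩ := exists_min_rep hS g
  rcases List.eq_nil_or_concat l with rfl | ⟨l', x, rfl⟩
  · exact ⟨1, 1, by simp [wordLength_one], one_mem_alph S, by simp [← c1]⟩
  · refine ⟨l'.prod, x, ?_, a1 x (by simp), by simp [← c1]⟩
    have hlen : l'.length + 1 = wordLength S g := by simpa using b1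
    have : wordLength S l'.prod ≤ l'.length :=
      wordLength_le (fun z hz => a1 z (by simp [hz])) rfl
    omega

lemma ball_finite {S : Set G} (hS : Subgroup.closure S = ⊤) (hfin : S.Finite) (n : ℕ) :
    {g : G | wordLength S g ≤ n}.Finite := by
  induction n with
  | zero =>
      refine Set.Finite.subset (Set.finite_singleton 1) ?_
      intro g hg
      simp only [Set.mem_setOf_eq, Nat.le_zero] at hg
      obtain ⟨l, a1, b1, c1⟩ := exists_min_rep hS g
      rw [hg] at b1
      rw [List.length_eq_zero_iff] at b1
      subst b1
      simp at c1; simp [← c1]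
  | succ n ih =>
      have : {g : G | wordLength S g ≤ n + 1} ⊆
          ⋃ x ∈ alph S, (fun h => h * x) '' {g : G | wordLength S g ≤ n} := by
        intro g hg
        obtain ⟨h, x, h1, h2, h3⟩ := exists_step hS hg
        exact Set.mem_biUnion h2 ⟨h, h1, h3.symm⟩
      exact Set.Finite.subset ((alph_finite hfin).biUnion (fun x _ => ih.image _)) this

end Subq
namespace Subq

variable {G : Type*} [Group G]

lemma growth_contra (S : Finset G) (hS : Subgroup.closure (S : Set G) = ⊤)
    (hg : (fun r : ℕ => (Nat.card {g : G // wordLength (S : Set G) g ≤ r} : ℝ))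
        =o[Filter.atTop] (fun r : ℕ => (r : ℝ) ^ 2))
    (C : ℕ) (hC : 0 < C)
    (h : ∀ r : ℕ, ∃ fs : Finset G, (r + 1) ^ 2 ≤ fs.card ∧
        ∀ g ∈ fs, wordLength (S : Set G) g ≤ C * (r + 1)) : False := by
  have hε : (0:ℝ) < 1 / (2 * (C:ℝ) ^ 2) := by positivity
  have hev := (Asymptotics.isLittleO_iff.mp hg) hε
  rw [Filter.eventually_atTop] at hev
  obtain ⟨N, hN⟩ := hev
  set n : ℕ := C * (N + 1) with hn_def
  have hn : N ≤ n := by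
    have : 1 * (N + 1) ≤ C * (N + 1) := Nat.mul_le_mul_right _ hC
    omega
  obtain ⟨fs, hcard, hlen⟩ := h N
  have hfin : {g : G | wordLength (S : Set G) g ≤ n}.Finite :=
    ball_finite hS S.finite_toSet n
  have h1 : (N + 1) ^ 2 ≤ Nat.card {g : G // wordLength (S : Set G) g ≤ n} := by
    have hsub : (fs : Set G) ⊆ {g : G | wordLength (S : Set G) g ≤ n} := fun g hg => hlen g hg
    calc (N + 1) ^ 2 ≤ fs.card := hcard
      _ = (fs : Set G).ncard := (Set.ncard_coe_finset fs).symm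
      _ ≤ {g : G | wordLength (S : Set G) g ≤ n}.ncard := Set.ncard_le_ncard hsub hfin
      _ = Nat.card {g : G // wordLength (S : Set G) g ≤ n} :=
          (Nat.card_coe_set_eq _).symm
  have h2 := hN n hn
  simp only [Real.norm_eq_abs] at h2
  rw [abs_of_nonneg (by positivity : (0:ℝ) ≤ (Nat.card {g : G // wordLength (S : Set G) g ≤ n} : ℝ)),
      abs_of_nonneg (by positivity : (0:ℝ) ≤ ((n:ℕ):ℝ) ^ 2)] at h2
  have hcardR : (((N:ℝ) + 1)) ^ 2 ≤ (Nat.card {g : G // wordLength (S : Set G) g ≤ n} : ℝ) := by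
    exact_mod_cast h1
  have hnr : ((n:ℕ):ℝ) = (C:ℝ) * ((N:ℝ) + 1) := by rw [hn_def]; push_cast; ring
  rw [hnr] at h2
  have hCpos : (0:ℝ) < (C:ℝ) := by exact_mod_cast hC
  have hx : (1:ℝ) ≤ (N:ℝ) + 1 := by
    have : (0:ℝ) ≤ (N:ℝ) := Nat.cast_nonneg N
    linarith
  have key : 1 / (2 * (C:ℝ) ^ 2) * ((C:ℝ) * ((N:ℝ) + 1)) ^ 2 = ((N:ℝ) + 1) ^ 2 / 2 := by
    field_simp
  rw [key] at h2
  nlinarith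

lemma inj_family_contra (S : Finset G) (hS : Subgroup.closure (S : Set G) = ⊤)
    (hg : (fun r : ℕ => (Nat.card {g : G // wordLength (S : Set G) g ≤ r} : ℝ))
        =o[Filter.atTop] (fun r : ℕ => (r : ℝ) ^ 2))
    (C : ℕ) (hC : 0 < C) (f : ℕ → ℕ → G)
    (hinj : ∀ i j i' j', f i j = f i' j' → i = i' ∧ j = j')
    (hlen : ∀ i j, wordLength (S : Set G) (f i j) ≤ C * (i + j + 1)) : False := by
  classical
  refine growth_contra S hS hg (2 * C) (by omega) (fun r => ?_)
  refine ⟨(Finset.range (r+1) ×ˢ Finset.range (r+1)).image (fun p => f p.1 p.2), ?_, ?_⟩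
  · rw [Finset.card_image_of_injOn]
    · simp [Nat.pow_two]
    · intro p _ q _ hpq
      obtain ⟨h1, h2⟩ := hinj _ _ _ _ hpq
      exact Prod.ext h1 h2
  · intro g hg
    simp only [Finset.mem_image, Finset.mem_product, Finset.mem_range] at hg
    obtain ⟨⟨i, j⟩, ⟨hi, hj⟩, rfl⟩ := hg
    calc wordLength (S : Set G) (f i j) ≤ C * (i + j + 1) := hlen i j
      _ ≤ 2 * C * (r + 1) := by nlinarith

end Subq
namespace Subq

variable {G : Type*} [Group G]

lemma eq_of_zpow_eq (hTF : Monoid.IsTorsionFree G) {z : G} (hz : z ≠ 1)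
    {m k : ℤ} (h : z ^ m = z ^ k) : m = k := by
  by_contra hmk
  have hd : z ^ (m - k) = 1 := by rw [zpow_sub, h, mul_inv_cancel]
  have hd0 : m - k ≠ 0 := fun hc => hmk (by omega)
  have hpow : z ^ (m - k).natAbs = 1 := by
    rcases Int.natAbs_eq (m - k) with he | he
    · rw [← zpow_natCast, ← he, hd]
    · rw [← zpow_natCast, ← neg_neg ((m - k).natAbs : ℤ), ← he, zpow_neg, hd, inv_one]
  exact hTF z hz (isOfFinOrder_iff_pow_eq_one.mpr
    ⟨(m - k).natAbs, by omega, hpow⟩)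

lemma eq_one_of_zpow_eq_one (hTF : Monoid.IsTorsionFree G) {g : G} {p : ℤ}
    (hp : p ≠ 0) (h : g ^ p = 1) : g = 1 := by
  by_contra hg
  exact hp (eq_of_zpow_eq hTF hg (by rw [h, zpow_zero]))

lemma eq_one_of_pow_eq_one (hTF : Monoid.IsTorsionFree G) {g : G} {p : ℕ}
    (hp : p ≠ 0) (h : g ^ p = 1) : g = 1 :=
  eq_one_of_zpow_eq_one hTF (p := (p : ℤ)) (by exact_mod_cast hp) (by rwa [zpow_natCast])

end Subq
namespace Subq

variable {G : Type*} [Group G]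

lemma exists_rel (hTF : Monoid.IsTorsionFree G) (T : Finset G)
    (hT : Subgroup.closure (T : Set G) = ⊤)
    (hgrowth : ∀ S : Finset G, Subgroup.closure (S : Set G) = ⊤ →
      (fun r : ℕ => (Nat.card {g : G // wordLength (S : Set G) g ≤ r} : ℝ))
        =o[Filter.atTop] (fun r : ℕ => (r : ℝ) ^ 2))
    {a b : G} (ha : a ≠ 1) (hb : b ≠ 1) :
    ∃ p q : ℤ, p ≠ 0 ∧ q ≠ 0 ∧ b ^ p = a ^ q := by
  classical
  have hrel : ∃ p q : ℤ, ¬(p = 0 ∧ q = 0) ∧ b ^ p = a ^ q := by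
    by_contra hcon
    push_neg at hcon
    set S : Finset G := insert a (insert b T) with hSdef
    have hsub : (T : Set G) ⊆ (S : Set G) := by
      intro x hx; simp [hSdef]; tauto
    have hS : Subgroup.closure (S : Set G) = ⊤ :=
      top_unique (hT ▸ Subgroup.closure_mono hsub)
    have haS : a ∈ alph (S : Set G) := mem_alph_of_mem (by simp [hSdef])
    have hbS : b ∈ alph (S : Set G) := mem_alph_of_mem (by simp [hSdef])
    refine inj_family_contra S hS (hgrowth S hS) 1 one_pos
      (fun i j => b ^ j * a ^ i) ?_ ?_
    · intro i j i' j' hf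
      have hf' : b ^ (j : ℤ) * a ^ (i : ℤ) = b ^ (j' : ℤ) * a ^ (i' : ℤ) := by
        simpa [zpow_natCast] using hf
      have h3 : (b ^ (j' : ℤ))⁻¹ * (b ^ (j : ℤ)) = (a ^ (i' : ℤ)) * (a ^ (i : ℤ))⁻¹ := by
        have := congrArg (fun x => (b ^ (j' : ℤ))⁻¹ * x * (a ^ (i : ℤ))⁻¹) hf'
        simpa [mul_assoc] using this
      have key : b ^ ((j : ℤ) - j') = a ^ ((i' : ℤ) - i) := by
        rw [sub_eq_neg_add, zpow_add, zpow_neg, sub_eq_add_neg, zpow_add, zpow_neg]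
        exact h3
      by_cases hz : (j : ℤ) - j' = 0 ∧ (i' : ℤ) - i = 0
      · constructor <;> omega
      · exact absurd key (hcon _ _ (by tauto))
    · intro i j
      calc wordLength (S : Set G) (b ^ j * a ^ i)
          ≤ wordLength (S : Set G) (b ^ j) + wordLength (S : Set G) (a ^ i) :=
            wordLength_mul_le hS _ _
        _ ≤ j + i := add_le_add (wordLength_pow_le hbS j) (wordLength_pow_le haS i)
        _ ≤ 1 * (i + j + 1) := by omega
  obtain ⟨p, q, hpq, hrel⟩ := hrel
  refine ⟨p, q, ?_, ?_, hrel⟩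
  · intro hp
    subst hp
    simp only [zpow_zero] at hrel
    exact hpq ⟨rfl, eq_of_zpow_eq hTF ha (by rw [← hrel, zpow_zero])⟩
  · intro hq
    subst hq
    simp only [zpow_zero] at hrel
    exact hpq ⟨eq_of_zpow_eq hTF hb (by rw [hrel, zpow_zero]), rfl⟩

end Subq
namespace Subq

variable {G : Type*} [Group G]

lemma exists_central [Nontrivial G] (hTF : Monoid.IsTorsionFree G) (T : Finset G)
    (hT : Subgroup.closure (T : Set G) = ⊤)
    (hgrowth : ∀ S : Finset G, Subgroup.closure (S : Set G) = ⊤ →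
      (fun r : ℕ => (Nat.card {g : G // wordLength (S : Set G) g ≤ r} : ℝ))
        =o[Filter.atTop] (fun r : ℕ => (r : ℝ) ^ 2)) :
    ∃ z : G, z ≠ 1 ∧ z ∈ Subgroup.center G := by
  classical
  obtain ⟨a₀, ha₀⟩ := exists_ne (1 : G)
  have key : ∀ g : G, ∃ k : ℤ, k ≠ 0 ∧ Commute (a₀ ^ k) g := by
    intro g
    by_cases hg : g = 1
    · exact ⟨1, one_ne_zero, by simp [hg]⟩
    · obtain ⟨p, q, hp, hq, hrel⟩ := exists_rel hTF T hT hgrowth ha₀ hg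
      refine ⟨q, hq, ?_⟩
      rw [← hrel]
      exact (Commute.refl g).zpow_left p
  choose k hk0 hkc using key
  set Q : ℤ := ∏ g ∈ T, k g with hQdef
  have hQ0 : Q ≠ 0 := Finset.prod_ne_zero_iff.mpr (fun g _ => hk0 g)
  set z : G := a₀ ^ Q with hzdef
  have hz1 : z ≠ 1 := fun hc => hQ0 (eq_of_zpow_eq hTF ha₀ (by rw [← hzdef, hc, zpow_zero]))
  have hcomm : ∀ g ∈ T, Commute z g := by
    intro g hg
    obtain ⟨m, hm⟩ := Finset.dvd_prod_of_mem k hg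
    have hQm : Q = k g * m := hQdef.trans hm
    rw [hzdef, hQm, zpow_mul]
    exact (hkc g).zpow_left m
  refine ⟨z, hz1, Subgroup.mem_center_iff.mpr ?_⟩
  intro g
  have hg : g ∈ Subgroup.centralizer {z} := by
    have hle : Subgroup.closure (T : Set G) ≤ Subgroup.centralizer {z} := by
      rw [Subgroup.closure_le]
      intro x hx
      rw [SetLike.mem_coe, Subgroup.mem_centralizer_iff]
      intro h hh
      simp only [Set.mem_singleton_iff] at hh
      subst hh
      exact hcomm x hx
    exact hle (hT ▸ Subgroup.mem_top g)
  rw [Subgroup.mem_centralizer_iff] at hg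
  exact (hg z rfl).symm

lemma finite_index_zpowers (hTF : Monoid.IsTorsionFree G) (T : Finset G)
    (hT : Subgroup.closure (T : Set G) = ⊤)
    (hgrowth : ∀ S : Finset G, Subgroup.closure (S : Set G) = ⊤ →
      (fun r : ℕ => (Nat.card {g : G // wordLength (S : Set G) g ≤ r} : ℝ))
        =o[Filter.atTop] (fun r : ℕ => (r : ℝ) ^ 2))
    {z : G} (hz : z ≠ 1) (hzc : z ∈ Subgroup.center G) :
    (Subgroup.zpowers z).FiniteIndex := by
  classical
  by_contra hI
  have hle : Subgroup.zpowers z ≤ Subgroup.center G := Subgroup.zpowers_le.mpr hzc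
  haveI hN : (Subgroup.zpowers z).Normal := by
    refine ⟨fun n hn g => ?_⟩
    have hcen := Subgroup.mem_center_iff.mp (hle hn)
    have : g * n * g⁻¹ = n := by rw [hcen g, mul_assoc, mul_inv_cancel, mul_one]
    rwa [this]
  haveI hInf : Infinite (G ⧸ Subgroup.zpowers z) := by
    have hidx : (Subgroup.zpowers z).index = 0 := by
      by_contra h0; exact hI ⟨h0⟩
    rw [Subgroup.index_eq_card] at hidx
    rcases Nat.card_eq_zero.mp hidx with he | hinf
    · exact absurd (he.false (QuotientGroup.mk' _ 1)) (fun h => h)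
    · exact hinf
  set S : Finset G := insert z T with hSdef
  have hsub : (T : Set G) ⊆ (S : Set G) := by intro x hx; simp [hSdef]; tauto
  have hS : Subgroup.closure (S : Set G) = ⊤ := top_unique (hT ▸ Subgroup.closure_mono hsub)
  have hzS : z ∈ alph (S : Set G) := mem_alph_of_mem (by simp [hSdef])
  set π := QuotientGroup.mk' (Subgroup.zpowers z) with hπdef
  have hπz : π z = 1 := (QuotientGroup.eq_one_iff z).mpr (Subgroup.mem_zpowers z)
  set Bq : ℕ → Set (G ⧸ Subgroup.zpowers z) :=
    fun n => π '' {g | wordLength (S : Set G) g ≤ n} with hBqdef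
  have f1 : ∀ n, (Bq n).Finite := fun n => (ball_finite hS S.finite_toSet n).image _
  have f2 : ∀ n, Bq n ⊆ Bq (n + 1) := by
    intro n
    apply Set.image_mono
    intro g hg
    simp only [Set.mem_setOf_eq] at hg ⊢
    omega
  have f3 : ∀ n, ¬ (Bq (n + 1) ⊆ Bq n) := by
    intro n hstab
    have hstep : ∀ m, Bq (n + m) ⊆ Bq n := by
      intro m
      induction m with
      | zero => exact subset_rfl
      | succ m ih =>
          rintro q ⟨g, hg, rfl⟩
          have hg' : wordLength (S : Set G) g ≤ n + m + 1 := by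
            simp only [Set.mem_setOf_eq] at hg; omega
          obtain ⟨h, x, h1, h2, rfl⟩ := exists_step hS (g := g) (n := n + m) hg'
          obtain ⟨h', hh', hph⟩ := ih ⟨h, h1, rfl⟩
          have hh'' : wordLength (S : Set G) h' ≤ n := hh'
          apply hstab
          refine ⟨h' * x, ?_, ?_⟩
          · show wordLength (S : Set G) (h' * x) ≤ n + 1
            have hwlx : wordLength (S : Set G) x ≤ 1 := wordLength_alph_le h2
            have := wordLength_mul_le hS h' x
            omega
          · show π (h' * x) = π (h * x)
            rw [map_mul, map_mul, hph]
    have huniv : Set.univ ⊆ Bq n := by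
      intro q _
      obtain ⟨g, rfl⟩ := QuotientGroup.mk'_surjective (Subgroup.zpowers z) q
      obtain ⟨l, hl, hp⟩ := exists_rep hS g
      have hwl : wordLength (S : Set G) g ≤ n + l.length :=
        le_trans (wordLength_le hl hp) (by omega)
      exact hstep l.length ⟨g, hwl, rfl⟩
    exact (not_finite_iff_infinite.mpr hInf) (Set.finite_univ_iff.mp ((f1 n).subset huniv))
  have f4 : ∀ r, r + 1 ≤ (Bq r).ncard := by
    intro r
    induction r with
    | zero =>
        have hne : (Bq 0).Nonempty := ⟨π 1, 1, by simp [wordLength_one], rfl⟩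
        have := (Set.ncard_pos (f1 0)).mpr hne
        omega
    | succ r ih =>
        have hss : Bq r ⊂ Bq (r + 1) := ssubset_iff_subset_not_subset.mpr ⟨f2 r, f3 r⟩
        have := Set.ncard_lt_ncard hss (f1 (r + 1))
        omega
  refine growth_contra S hS (hgrowth S hS) 2 (by omega) (fun r => ?_)
  obtain ⟨F, hFsub, hFcard⟩ := Set.exists_subset_card_eq (f4 r)
  have hFfin : F.Finite := (f1 r).subset hFsub
  have hlift : ∀ q ∈ F, ∃ g, wordLength (S : Set G) g ≤ r ∧ π g = q := by
    intro q hq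
    obtain ⟨g, hg, rfl⟩ := hFsub hq
    exact ⟨g, hg, rfl⟩
  choose! v hv1 hv2 using hlift
  refine ⟨(hFfin.toFinset ×ˢ Finset.range (r + 1)).image (fun p => v p.1 * z ^ p.2), ?_, ?_⟩
  · rw [Finset.card_image_of_injOn]
    · rw [Finset.card_product, Finset.card_range]
      have : hFfin.toFinset.card = r + 1 := by
        rw [← Set.ncard_eq_toFinset_card F hFfin, hFcard]
      rw [this]; ring_nf; omega
    · intro p hp q hq hpq
      have hpq' : v p.1 * z ^ p.2 = v q.1 * z ^ q.2 := hpq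
      simp only [Finset.coe_product, Set.mem_prod, Finset.mem_coe,
        Set.Finite.mem_toFinset, Finset.mem_range] at hp hq
      have hπp : π (v p.1 * z ^ p.2) = p.1 := by
        rw [map_mul, map_pow, hπz, one_pow, mul_one, hv2 p.1 hp.1]
      have hπq : π (v q.1 * z ^ q.2) = q.1 := by
        rw [map_mul, map_pow, hπz, one_pow, mul_one, hv2 q.1 hq.1]
      have h1 : p.1 = q.1 := by rw [← hπp, ← hπq, hpq']
      have h2 : z ^ p.2 = z ^ q.2 := by
        rw [h1] at hpq'
        exact mul_left_cancel hpq'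
      have h3 : (p.2 : ℤ) = (q.2 : ℤ) := by
        apply eq_of_zpow_eq hTF hz
        rw [zpow_natCast, zpow_natCast, h2]
      exact Prod.ext h1 (by exact_mod_cast h3)
  · intro g hg
    simp only [Finset.mem_image, Finset.mem_product, Set.Finite.mem_toFinset,
      Finset.mem_range] at hg
    obtain ⟨⟨q, i⟩, ⟨hqF, hir⟩, rfl⟩ := hg
    show wordLength (S : Set G) (v q * z ^ i) ≤ 2 * (r + 1)
    have h1 : wordLength (S : Set G) (v q) ≤ r := hv1 q hqF
    have h2 : wordLength (S : Set G) (z ^ i) ≤ i := wordLength_pow_le hzS i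
    have := wordLength_mul_le hS (v q) (z ^ i)
    omega

end Subq
open Subq in
/-- A finitely generated, torsion-free, infinite group of subquadratic growth
is isomorphic to ℤ. -/
theorem subquadratic_growth_torsionFree_iso_Z (G : Type*) [Group G] [Infinite G]
    (hfg : Group.FG G) (hTF : Monoid.IsTorsionFree G)
    (hgrowth : ∀ S : Finset G, Subgroup.closure (S : Set G) = ⊤ →
      (fun r : ℕ => (Nat.card {g : G // wordLength (S : Set G) g ≤ r} : ℝ))
        =o[atTop] (fun r : ℕ => (r : ℝ) ^ 2)) :
    Nonempty (G ≃* Multiplicative ℤ) := by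
  classical
  obtain ⟨Tset, hTtop, hTfin⟩ := Group.fg_iff.mp hfg
  set T : Finset G := hTfin.toFinset with hTdef
  have hT : Subgroup.closure (T : Set G) = ⊤ := by
    rw [hTdef, Set.Finite.coe_toFinset]; exact hTtop
  obtain ⟨z, hz1, hzc⟩ := Subq.exists_central hTF T hT hgrowth
  haveI hFI : (Subgroup.zpowers z).FiniteIndex :=
    Subq.finite_index_zpowers hTF T hT hgrowth hz1 hzc
  haveI : (Subgroup.center G).FiniteIndex :=
    Subgroup.finiteIndex_of_le (Subgroup.zpowers_le.mpr hzc)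
  have hnidx : (Subgroup.center G).index ≠ 0 := Subgroup.FiniteIndex.index_ne_zero
  set φ := MonoidHom.transferCenterPow G with hφdef
  have hφinj : Function.Injective φ := by
    rw [injective_iff_map_eq_one]
    intro a ha
    have h1 : ((φ a : G)) = (1 : G) := by rw [ha]; rfl
    rw [hφdef, MonoidHom.transferCenterPow_apply] at h1
    exact Subq.eq_one_of_pow_eq_one hTF hnidx h1
  have hcomm : ∀ a b : G, a * b = b * a := by
    intro a b
    apply hφinj
    rw [map_mul, map_mul]; exact Subtype.ext (Subgroup.mem_center_iff.mp (φ b).2 (φ a : G))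
  -- every nontrivial element has a power equal to a power of z
  have hrelz : ∀ g : G, ∃ p : ℤ, p ≠ 0 ∧ ∃ k : ℤ, g ^ p = z ^ k := by
    intro g
    by_cases hg : g = 1
    · exact ⟨1, one_ne_zero, 0, by simp [hg]⟩
    · obtain ⟨p, q, hp, hq, hrel⟩ := Subq.exists_rel hTF T hT hgrowth hz1 hg
      exact ⟨p, hp, q, hrel⟩
  choose p hp0 hrel using hrelz
  set P : ℤ := ∏ g ∈ T, p g with hPdef
  have hP0 : P ≠ 0 := Finset.prod_ne_zero_iff.mpr (fun g _ => hp0 g)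
  have hall : ∀ g : G, ∃ k : ℤ, g ^ P = z ^ k := by
    set K : Subgroup G :=
      { carrier := {g | ∃ k : ℤ, g ^ P = z ^ k},
        one_mem' := ⟨0, by simp⟩,
        mul_mem' := by
          rintro x y ⟨k1, hk1⟩ ⟨k2, hk2⟩
          refine ⟨k1 + k2, ?_⟩
          have hc : Commute x y := hcomm x y
          rw [hc.mul_zpow, hk1, hk2, zpow_add],
        inv_mem' := by
          rintro x ⟨k, hk⟩
          refine ⟨-k, ?_⟩
          rw [inv_zpow, hk, ← zpow_neg] } with hKdef
    have hTK : (T : Set G) ⊆ (K : Set G) := by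
      intro g hgT
      obtain ⟨k, hk⟩ := hrel g
      obtain ⟨m, hm⟩ := Finset.dvd_prod_of_mem p (Finset.mem_coe.mp hgT)
      have hPm : P = p g * m := hPdef.trans hm
      refine ⟨k * m, ?_⟩
      rw [hPm, zpow_mul, hk, ← zpow_mul]
    have hKtop : (⊤ : Subgroup G) ≤ K := by
      rw [← hT]
      exact (Subgroup.closure_le K).mpr hTK
    exact fun g => hKtop (Subgroup.mem_top g)
  choose nn hnn using hall
  have hnn_inj : ∀ {a b : G}, nn a = nn b → a = b := by
    intro a b hab
    have h1 : a ^ P = b ^ P := by rw [hnn a, hnn b, hab]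
    have hc : Commute a b⁻¹ := hcomm a b⁻¹
    have h2 : (a * b⁻¹) ^ P = 1 := by
      rw [hc.mul_zpow, inv_zpow, h1, mul_inv_cancel]
    exact mul_inv_eq_one.mp (Subq.eq_one_of_zpow_eq_one hTF hP0 h2)
  have hnn_add : ∀ a b : G, nn (a * b) = nn a + nn b := by
    intro a b
    apply Subq.eq_of_zpow_eq hTF hz1
    have hc : Commute a b := hcomm a b
    rw [← hnn (a * b), hc.mul_zpow, hnn a, hnn b, zpow_add]
  have hnn_one : nn 1 = 0 := by
    apply Subq.eq_of_zpow_eq hTF hz1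
    rw [← hnn 1, one_zpow, zpow_zero]
  have hnn_zpow : ∀ (x : G) (k : ℤ), nn (x ^ k) = k * nn x := by
    intro x k
    apply Subq.eq_of_zpow_eq hTF hz1
    calc z ^ nn (x ^ k) = (x ^ k) ^ P := (hnn _).symm
      _ = x ^ (k * P) := by rw [← zpow_mul]
      _ = (x ^ P) ^ k := by rw [mul_comm k P, zpow_mul]
      _ = (z ^ nn x) ^ k := by rw [hnn x]
      _ = z ^ (k * nn x) := by rw [← zpow_mul, mul_comm]
  set R : AddSubgroup ℤ :=
    { carrier := Set.range nn,
      zero_mem' := ⟨1, hnn_one⟩,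
      add_mem' := by
        rintro x y ⟨a, rfl⟩ ⟨b, rfl⟩
        exact ⟨a * b, hnn_add a b⟩,
      neg_mem' := by
        rintro x ⟨a, rfl⟩
        refine ⟨a⁻¹, ?_⟩
        have := hnn_zpow a (-1)
        simpa using this } with hRdef
  obtain ⟨d, hd⟩ := Int.subgroup_cyclic R
  have hdR : d ∈ R := by
    rw [hd]
    exact AddSubgroup.mem_closure_singleton.mpr ⟨1, one_zsmul d⟩
  obtain ⟨x, hx⟩ := hdR
  have hd0 : d ≠ 0 := by
    intro h0
    have hzero : ∀ g : G, nn g = 0 := by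
      intro g
      have hgR : nn g ∈ R := ⟨g, rfl⟩
      rw [hd, h0] at hgR
      obtain ⟨m, hm⟩ := AddSubgroup.mem_closure_singleton.mp hgR
      simpa using hm.symm
    obtain ⟨g, hg⟩ := exists_ne (1 : G)
    exact hg (hnn_inj (by rw [hzero g, hnn_one]))
  have hgen : ∀ g : G, ∃ k : ℤ, x ^ k = g := by
    intro g
    have hgR : nn g ∈ R := ⟨g, rfl⟩
    rw [hd] at hgR
    obtain ⟨k, hk⟩ := AddSubgroup.mem_closure_singleton.mp hgR
    refine ⟨k, hnn_inj ?_⟩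
    rw [hnn_zpow, hx]
    simpa using hk
  have hx1 : x ≠ 1 := by
    intro h
    exact hd0 (by rw [← hx, h, hnn_one])
  have hbij : Function.Bijective (zpowersHom G x) := by
    constructor
    · intro m k hmk
      have h1 : x ^ (Multiplicative.toAdd m) = x ^ (Multiplicative.toAdd k) := by
        simpa [zpowersHom_apply] using hmk
      exact Multiplicative.toAdd.injective (Subq.eq_of_zpow_eq hTF hx1 h1)
    · intro g
      obtain ⟨k, hk⟩ := hgen g
      exact ⟨Multiplicative.ofAdd k, by rw [zpowersHom_apply]; simpa using hk⟩
  exact ⟨(MulEquiv.ofBijective (zpowersHom G x) hbij).symm⟩
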